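/- Suppose the pair (C,p) is welfare-optimal, i.e., W(M(C,p)) ≥ W(M(C',p')) for every integer C' ≥ 1 and every p' ≥ 0, and suppose q := Pr_{V∼F}[ d_V(p) ≥ C ] > 0. Then there exists an integer C' ≥ 1 such that (1 + 2/q)·W(M(C')) ≥ W(M(C,p)), where M(C') is the safe-price auction with cap C'. (No independence assumption across firms is needed: the statement is about an arbitrary distribution F over valuation curves.) -/

import Mathlib

open MeasureTheory ProbabilityTheory

noncomputable section

/-- The marginal value of the `j`-th license under the curve `V`. -/
def marg (V : ℕ → ℝ) (j : ℕ) : ℝ := V j - V (j - 1)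

/-- A valuation curve: `V 0 = 0`, nondecreasing, nonincreasing marginal values,
and only finitely many nonzero marginal values. -/
def IsValuation (V : ℕ → ℝ) : Prop :=
  V 0 = 0 ∧ Monotone V ∧ (∀ j : ℕ, 1 ≤ j → marg V (j + 1) ≤ marg V j) ∧
    ∃ N : ℕ, ∀ j : ℕ, N ≤ j → marg V j = 0

/-- A social cost function: `Q 0 = 0`, nondecreasing, and (discretely) convex. -/
def IsCost (Q : ℕ → ℝ) : Prop :=
  Q 0 = 0 ∧ Monotone Q ∧ ∀ x : ℕ, 1 ≤ x → Q x - Q (x - 1) ≤ Q (x + 1) - Q x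

/-- The demand of a valuation curve at price `p`:
`sup { j ≥ 1 : marg V j ≥ p } ∈ ℕ ∪ {∞}` (with `sup ∅ = 0`). -/
def dem (V : ℕ → ℝ) (p : ℝ) : ℕ∞ :=
  sSup {j : ℕ∞ | ∃ k : ℕ, j = (k : ℕ∞) ∧ 1 ≤ k ∧ p ≤ marg V k}

/-- Number of licenses sold to curve `V` under cap `C` (possibly `∞`) and price floor `p`. -/
def sold (C : ℕ∞) (p : ℝ) (V : ℕ → ℝ) : ℕ := (min C (dem V p)).toNat

/-- The safe price for cap `C`: the average social cost `Q C / C` per license. -/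
def safeP (Q : ℕ → ℝ) (C : ℕ) : ℝ := Q C / C

/-- Truth-telling expected welfare of the no-ceiling cap-and-price auction `M(C,p)`
for a distribution `F` over (combined) valuation curves. -/
def Wfl (F : Measure (ℕ → ℝ)) (Q : ℕ → ℝ) (C : ℕ∞) (p : ℝ) : ℝ :=
  ∫ V, (V (sold C p V) - Q (sold C p V)) ∂F

/-- Number of licenses sold under cap `C`, price floor `p`, and price ceiling `pbar`. -/
def xceil (C : ℕ) (p pbar : ℝ) (V : ℕ → ℝ) : ℕ :=
  if (C : ℕ∞) ≤ dem V pbar then (dem V pbar).toNat else sold (C : ℕ∞) p V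

/-- Truth-telling expected welfare of the cap-and-price auction `M(C,p,pbar)`. -/
def Wceil (F : Measure (ℕ → ℝ)) (Q : ℕ → ℝ) (C : ℕ) (p pbar : ℝ) : ℝ :=
  ∫ V, (V (xceil C p pbar V) - Q (xceil C p pbar V)) ∂F

/-- The combined valuation curve of a profile of valuation curves. -/
def comb {n : ℕ} (Vp : Fin n → ℕ → ℝ) (x : ℕ) : ℝ :=
  sSup {s : ℝ | ∃ y : Fin n → ℕ, (∑ i, y i) = x ∧ s = ∑ i, Vp i (y i)}

open Classical in
/-- Product of a family of probability measures (0 if the family fails to consist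
of probability measures). -/
def piProb {ι : Type*} [Fintype ι] {α : ι → Type*} [∀ i, MeasurableSpace (α i)]
    (μ : ∀ i, Measure (α i)) : Measure (∀ i, α i) :=
  if h : ∀ i, IsProbabilityMeasure (μ i) then
    haveI := h
    Measure.pi μ
  else 0

/-- Truth-telling expected welfare of `M(C,p)` for independent firms with
valuation distributions `F i`, computed via the combined valuation curve. -/
def Wcomb {n : ℕ} (F : Fin n → Measure (ℕ → ℝ)) (Q : ℕ → ℝ) (C : ℕ∞) (p : ℝ) : ℝ :=
  ∫ Vp, (comb Vp (sold C p (comb Vp)) - Q (sold C p (comb Vp))) ∂(piProb F)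

/-- Truth-telling expected welfare of `M(C,p,pbar)` for independent firms. -/
def WceilComb {n : ℕ} (F : Fin n → Measure (ℕ → ℝ)) (Q : ℕ → ℝ) (C : ℕ) (p pbar : ℝ) : ℝ :=
  ∫ Vp, (comb Vp (xceil C p pbar (comb Vp)) - Q (xceil C p pbar (comb Vp))) ∂(piProb F)

/-- `W^{(1)}`: the expected optimal welfare from allocating licenses to a single firm. -/
def W1 {n : ℕ} (F : Fin n → Measure (ℕ → ℝ)) (Q : ℕ → ℝ) : ℝ :=
  ∫ Vp, sSup {w : ℝ | ∃ (i : Fin n) (x : ℕ), w = Vp i x - Q x} ∂(piProb F)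

/-- The per-license price in the uniform-price auction with cap `C` and floor `pf`,
given a bid profile `b`. -/
def priceOf {n : ℕ} (C : ℕ) (pf : ℝ) (b : Fin n → ℕ → ℝ) : ℝ :=
  if (∑ i, dem (b i) pf) < (C : ℕ∞) then pf else comb b C - comb b (C - 1)

/-- A (measurable) tie-breaking allocation rule for the uniform-price auction with
cap `C` and price floor `pf`. -/
def IsAllocRule {n : ℕ} (C : ℕ) (pf : ℝ) (alloc : (Fin n → ℕ → ℝ) → Fin n → ℕ) : Prop :=
  Measurable alloc ∧
    ∀ b : Fin n → ℕ → ℝ, (∀ i, IsValuation (b i)) →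
      (((∑ i, dem (b i) pf) < (C : ℕ∞)) → ∀ i, alloc b i = (dem (b i) pf).toNat) ∧
      (((C : ℕ∞) ≤ ∑ i, dem (b i) pf) →
        (∑ i, alloc b i) = C ∧
          ∀ y : Fin n → ℕ, (∑ i, y i) = C → (∑ i, b i (y i)) ≤ ∑ i, b i (alloc b i))

/-- The strategy `σi` never overbids: with probability one the bid is a valuation
curve pointwise below the true valuation. -/
def NoOverbid (σi : Kernel (ℕ → ℝ) (ℕ → ℝ)) : Prop :=
  ∀ V : ℕ → ℝ, IsValuation V → σi V {B | IsValuation B ∧ ∀ x, B x ≤ V x} = 1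

/-- Expected welfare when the firms play the (randomized) strategy profile `σ`. -/
def EqWelfare {n : ℕ} (F : Fin n → Measure (ℕ → ℝ)) (σ : Fin n → Kernel (ℕ → ℝ) (ℕ → ℝ))
    (alloc : (Fin n → ℕ → ℝ) → Fin n → ℕ) (Q : ℕ → ℝ) : ℝ :=
  ∫ Vp, (∫ b, ((∑ i, Vp i (alloc b i)) - Q (∑ i, alloc b i))
      ∂(piProb fun j => σ j (Vp j))) ∂(piProb F)

/-- Expected utility of firm `i` with valuation `Vi` when every firm plays `σ`. -/
def EUeq {n : ℕ} (F : Fin n → Measure (ℕ → ℝ)) (σ : Fin n → Kernel (ℕ → ℝ) (ℕ → ℝ))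
    (alloc : (Fin n → ℕ → ℝ) → Fin n → ℕ) (C : ℕ) (pf : ℝ) (i : Fin n) (Vi : ℕ → ℝ) : ℝ :=
  ∫ Vp, (∫ b, (Vi (alloc b i) - priceOf C pf b * (alloc b i : ℝ))
      ∂(piProb fun j => σ j (Function.update Vp i Vi j))) ∂(piProb F)

/-- Expected utility of firm `i` with valuation `Vi` deviating to the fixed bid `Bt`
while the others play `σ`. -/
def EUdev {n : ℕ} (F : Fin n → Measure (ℕ → ℝ)) (σ : Fin n → Kernel (ℕ → ℝ) (ℕ → ℝ))
    (alloc : (Fin n → ℕ → ℝ) → Fin n → ℕ) (C : ℕ) (pf : ℝ) (i : Fin n) (Vi Bt : ℕ → ℝ) : ℝ :=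
  ∫ Vp, (∫ b, (Vi (alloc b i) - priceOf C pf b * (alloc b i : ℝ))
      ∂(piProb fun j => if j = i then Measure.dirac Bt else σ j (Vp j))) ∂(piProb F)

/-- Bayes–Nash equilibrium of the uniform-price auction with cap `C` and floor `pf`. -/
def IsBNE {n : ℕ} (F : Fin n → Measure (ℕ → ℝ)) (σ : Fin n → Kernel (ℕ → ℝ) (ℕ → ℝ))
    (alloc : (Fin n → ℕ → ℝ) → Fin n → ℕ) (C : ℕ) (pf : ℝ) : Prop :=
  ∀ (i : Fin n) (Vi : ℕ → ℝ), IsValuation Vi → ∀ Bt : ℕ → ℝ, IsValuation Bt →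
    EUdev F σ alloc C pf i Vi Bt ≤ EUeq F σ alloc C pf i Vi

/-- `θ_V = min( d_V(p), d_V(P(C)) )`, as a natural number. -/
def thetaN (Q : ℕ → ℝ) (C : ℕ) (p : ℝ) (V : ℕ → ℝ) : ℕ :=
  (min (dem V p) (dem V (safeP Q C))).toNat

-- ### auxiliary lemmas

private lemma antitone_of_succ {V : ℕ → ℝ} (hstep : ∀ j : ℕ, 1 ≤ j → marg V (j + 1) ≤ marg V j) :
    ∀ i j : ℕ, 1 ≤ i → i ≤ j → marg V j ≤ marg V i := by
  intro i j hi hij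
  induction j with
  | zero => omega
  | succ k ih =>
    rcases Nat.lt_or_ge i (k+1) with h | h
    · have hik : i ≤ k := by omega
      exact le_trans (hstep k (by omega)) (ih hik)
    · have : i = k + 1 := by omega
      subst this; exact le_rfl

private lemma marg_antitone {V : ℕ → ℝ} (hV : IsValuation V) :
    ∀ i j : ℕ, 1 ≤ i → i ≤ j → marg V j ≤ marg V i :=
  antitone_of_succ hV.2.2.1

private lemma cost_mono {Q : ℕ → ℝ} (hQ : IsCost Q) :
    ∀ i j : ℕ, 1 ≤ i → i ≤ j → marg Q i ≤ marg Q j := by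
  intro i j hi hij
  have hstep : ∀ k : ℕ, 1 ≤ k → marg Q k ≤ marg Q (k + 1) := by
    intro k hk
    have := hQ.2.2 k hk
    simp only [marg, Nat.add_sub_cancel]
    exact this
  clear hQ
  induction j with
  | zero => omega
  | succ k ih =>
    rcases Nat.lt_or_ge i (k+1) with h | h
    · exact le_trans (ih (by omega)) (hstep k (by omega))
    · have : i = k + 1 := by omega
      subst this; exact le_rfl

private lemma telescope {f : ℕ → ℝ} (hf : f 0 = 0) (k : ℕ) :
    f k = ∑ j ∈ Finset.Icc 1 k, marg f j := by
  induction k with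
  | zero => simpa using hf
  | succ n ih =>
    rw [Finset.sum_Icc_succ_top (by omega : 1 ≤ n+1), ← ih]
    simp [marg]

private lemma le_dem_iff {V : ℕ → ℝ} (hV : IsValuation V) {j : ℕ} (hj : 1 ≤ j) (x : ℝ) :
    (j : ℕ∞) ≤ dem V x ↔ x ≤ marg V j := by
  constructor
  · intro h
    by_contra hx
    have hub : dem V x ≤ ((j - 1 : ℕ) : ℕ∞) := by
      apply sSup_le
      rintro a ⟨k, rfl, hk1, hkx⟩
      have hkj : k ≤ j - 1 := by
        by_contra hkk
        have hjk : j ≤ k := by omega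
        exact hx (le_trans hkx (marg_antitone hV j k hj hjk))
      exact_mod_cast hkj
    have h2 : (j : ℕ∞) ≤ ((j - 1 : ℕ) : ℕ∞) := le_trans h hub
    have h3 : j ≤ j - 1 := by exact_mod_cast h2
    omega
  · intro h
    exact le_sSup ⟨j, rfl, hj, h⟩

private lemma le_dem_iff' {V : ℕ → ℝ} {j : ℕ} (hj : 1 ≤ j) (x : ℝ) :
    (j : ℕ∞) ≤ dem V x ↔ ∃ k : ℕ, j ≤ k ∧ 1 ≤ k ∧ x ≤ marg V k := by
  constructor
  · intro h
    by_contra hx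
    push_neg at hx
    have hub : dem V x ≤ ((j - 1 : ℕ) : ℕ∞) := by
      apply sSup_le
      rintro a ⟨k, rfl, hk1, hkx⟩
      have hkj : k ≤ j - 1 := by
        by_contra hkk
        exact absurd hkx (not_le.2 (hx k (by omega) hk1))
      exact_mod_cast hkj
    have h2 : (j : ℕ∞) ≤ ((j - 1 : ℕ) : ℕ∞) := le_trans h hub
    have h3 : j ≤ j - 1 := by exact_mod_cast h2
    omega
  · rintro ⟨k, hjk, hk1, hkx⟩
    exact le_trans (by exact_mod_cast hjk) (le_sSup ⟨k, rfl, hk1, hkx⟩)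

private lemma sold_le {Cc : ℕ} {x : ℝ} {V : ℕ → ℝ} : sold (Cc : ℕ∞) x V ≤ Cc := by
  unfold sold
  have h : min (Cc : ℕ∞) (dem V x) ≤ (Cc : ℕ∞) := min_le_left _ _
  have := ENat.toNat_le_toNat h (by simp)
  simpa using this

private lemma le_sold_iff {V : ℕ → ℝ} (hV : IsValuation V) {j Cc : ℕ} (hj : 1 ≤ j)
    (hjC : j ≤ Cc) (x : ℝ) : j ≤ sold (Cc : ℕ∞) x V ↔ x ≤ marg V j := by
  unfold sold
  have hne : min (Cc : ℕ∞) (dem V x) ≠ ⊤ := by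
    intro h
    rw [min_eq_top] at h
    exact (ENat.coe_ne_top Cc) h.1
  have hcoe : ((min (Cc : ℕ∞) (dem V x)).toNat : ℕ∞) = min (Cc : ℕ∞) (dem V x) :=
    ENat.coe_toNat hne
  constructor
  · intro h
    have h2 : (j : ℕ∞) ≤ min (Cc : ℕ∞) (dem V x) := by
      rw [← hcoe]; exact_mod_cast h
    exact (le_dem_iff hV hj x).1 (le_trans h2 (min_le_right _ _))
  · intro h
    have h2 : (j : ℕ∞) ≤ min (Cc : ℕ∞) (dem V x) :=
      le_min (by exact_mod_cast hjC) ((le_dem_iff hV hj x).2 h)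
    rw [← hcoe] at h2
    exact_mod_cast h2

private lemma welfare_eq {V Q : ℕ → ℝ} (hV : IsValuation V) (hQ : IsCost Q)
    {Cc : ℕ} (x : ℝ) :
    V (sold (Cc : ℕ∞) x V) - Q (sold (Cc : ℕ∞) x V)
      = ∑ j ∈ Finset.Icc 1 Cc, (if x ≤ marg V j then marg V j - marg Q j else 0) := by
  have hsC : sold (Cc : ℕ∞) x V ≤ Cc := sold_le
  have h1 : V (sold (Cc : ℕ∞) x V) = ∑ j ∈ Finset.Icc 1 (sold (Cc : ℕ∞) x V), marg V j :=
    telescope hV.1 _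
  have h2 : Q (sold (Cc : ℕ∞) x V) = ∑ j ∈ Finset.Icc 1 (sold (Cc : ℕ∞) x V), marg Q j :=
    telescope hQ.1 _
  have key : ∀ j ∈ Finset.Icc 1 Cc, (if x ≤ marg V j then marg V j - marg Q j else 0)
      = if j ∈ Finset.Icc 1 (sold (Cc : ℕ∞) x V) then marg V j - marg Q j else 0 := by
    intro j hj
    rw [Finset.mem_Icc] at hj
    by_cases hxx : x ≤ marg V j
    · rw [if_pos hxx, if_pos]
      rw [Finset.mem_Icc]
      exact ⟨hj.1, (le_sold_iff hV hj.1 hj.2 x).2 hxx⟩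
    · rw [if_neg hxx, if_neg]
      rw [Finset.mem_Icc]
      rintro ⟨h1', h2'⟩
      exact hxx ((le_sold_iff hV hj.1 hj.2 x).1 h2')
  rw [Finset.sum_congr rfl key, Finset.sum_ite_mem, h1, h2, ← Finset.sum_sub_distrib]
  congr 1
  symm
  rw [Finset.inter_eq_right]
  intro j hj
  rw [Finset.mem_Icc] at hj ⊢
  exact ⟨hj.1, le_trans hj.2 hsC⟩

private lemma partial_sum_nonneg (a : ℕ → ℝ) (Cc n : ℕ) (hn : n ≤ Cc)
    (hmono : ∀ i j : ℕ, 1 ≤ i → i ≤ j → a j ≤ a i)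
    (htot : ∑ j ∈ Finset.Icc 1 Cc, a j = 0) :
    0 ≤ ∑ j ∈ Finset.Icc 1 n, a j := by
  rcases Nat.eq_zero_or_pos n with rfl | hn1
  · simp
  have hsplit : (∑ j ∈ Finset.Icc 1 n, a j) + ∑ j ∈ Finset.Icc (n+1) Cc, a j
      = ∑ j ∈ Finset.Icc 1 Cc, a j := by
    rw [show Finset.Icc (n+1) Cc = Finset.Ioc n Cc from Finset.Icc_add_one_left_eq_Ioc n Cc,
      show Finset.Icc 1 n = Finset.Ioc 0 n from Finset.Icc_add_one_left_eq_Ioc 0 n,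
      show Finset.Icc 1 Cc = Finset.Ioc 0 Cc from Finset.Icc_add_one_left_eq_Ioc 0 Cc]
    exact Finset.sum_Ioc_consecutive a (Nat.zero_le n) hn
  have hb1 : (n : ℝ) * a n ≤ ∑ j ∈ Finset.Icc 1 n, a j := by
    have := Finset.card_nsmul_le_sum (Finset.Icc 1 n) a (a n)
      (fun j hj => by rw [Finset.mem_Icc] at hj; exact hmono j n hj.1 hj.2)
    rw [Nat.card_Icc] at this
    simpa [nsmul_eq_mul] using this
  have hb2 : ∑ j ∈ Finset.Icc (n+1) Cc, a j ≤ ((Cc : ℝ) - n) * a n := by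
    have := Finset.sum_le_card_nsmul (Finset.Icc (n+1) Cc) a (a n)
      (fun j hj => by rw [Finset.mem_Icc] at hj; exact hmono n j hn1 (by omega))
    rw [Nat.card_Icc] at this
    have hcard : ((Cc + 1 - (n+1) : ℕ) : ℝ) = (Cc : ℝ) - n := by
      have h' : Cc + 1 - (n+1) = Cc - n := by omega
      rw [h', Nat.cast_sub hn]
    rw [nsmul_eq_mul, hcard] at this
    exact this
  have hCc : (0:ℝ) < Cc := by
    have : (0:ℕ) < Cc := by omega
    exact_mod_cast this
  have hnR : (0:ℝ) < n := by exact_mod_cast hn1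
  have hnC : (n:ℝ) ≤ Cc := by exact_mod_cast hn
  nlinarith [hsplit, htot, hb1, hb2]


/-- If `(C,p)` is welfare-optimal and `q = Pr[d_V(p) ≥ C] > 0`, then
some safe-price auction `M(C')` satisfies `(1 + 2/q)·W(M(C')) ≥ W(M(C,p))`. -/
theorem stmt4 (F : Measure (ℕ → ℝ)) (hprob : IsProbabilityMeasure F)
    (hval : F {V | IsValuation V} = 1)
    (hint : ∀ x : ℕ, Integrable (fun V : ℕ → ℝ => V x) F)
    (Q : ℕ → ℝ) (hQ : IsCost Q)
    (C : ℕ) (p : ℝ) (hC : 1 ≤ C) (hp : 0 ≤ p)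
    (hopt : ∀ (C' : ℕ) (p' : ℝ), 1 ≤ C' → 0 ≤ p' →
      Wfl F Q (C' : ℕ∞) p' ≤ Wfl F Q (C : ℕ∞) p)
    (hq : 0 < (F {V | (C : ℕ∞) ≤ dem V p}).toReal) :
    ∃ C' : ℕ, 1 ≤ C' ∧
      Wfl F Q (C : ℕ∞) p ≤
        (1 + 2 / (F {V | (C : ℕ∞) ≤ dem V p}).toReal) *
          Wfl F Q (C' : ℕ∞) (safeP Q C') := by
  classical
  haveI := hprob
  set r := safeP Q C with hrdef
  set A : Set (ℕ → ℝ) := {V | (C : ℕ∞) ≤ dem V p} with hAdef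
  set q := (F A).toReal with hqdef
  refine ⟨C, hC, ?_⟩
  rw [← hrdef]
  -- basic measurability / integrability
  have hmeas_m : ∀ j : ℕ, Measurable fun V : ℕ → ℝ => marg V j := fun j =>
    (measurable_pi_apply j).sub (measurable_pi_apply (j - 1))
  have hint_m : ∀ j : ℕ, Integrable (fun V : ℕ → ℝ => marg V j) F := fun j =>
    (hint j).sub (hint (j - 1))
  have hSmeas : ∀ (x : ℝ) (j : ℕ), MeasurableSet {V : ℕ → ℝ | x ≤ marg V j} := fun x j =>
    measurableSet_le measurable_const (hmeas_m j)
  have hvalmeas : MeasurableSet {V : ℕ → ℝ | IsValuation V} := by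
    have hrw : {V : ℕ → ℝ | IsValuation V}
        = ({V : ℕ → ℝ | V 0 = 0} ∩ ⋂ n : ℕ, {V : ℕ → ℝ | V n ≤ V (n + 1)})
          ∩ ((⋂ j : ℕ, {V : ℕ → ℝ | marg V (j + 1 + 1) ≤ marg V (j + 1)})
          ∩ ⋃ N : ℕ, ⋂ j : ℕ, {V : ℕ → ℝ | marg V (N + j) = 0}) := by
      ext V
      simp only [Set.mem_setOf_eq, Set.mem_inter_iff, Set.mem_iInter, Set.mem_iUnion,
        IsValuation]
      constructor
      · rintro ⟨h0, hmono, hconc, N, hN⟩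
        exact ⟨⟨h0, fun n => hmono (Nat.le_succ n)⟩,
          ⟨fun j => hconc (j + 1) (by omega), N, fun j => hN (N + j) (by omega)⟩⟩
      · rintro ⟨⟨h0, hmono⟩, hconc, N, hN⟩
        refine ⟨h0, monotone_nat_of_le_succ hmono, ?_, N, ?_⟩
        · intro j hj
          have h := hconc (j - 1)
          rwa [show j - 1 + 1 = j by omega] at h
        · intro j hj
          have h := hN (j - N)
          rwa [show N + (j - N) = j by omega] at h
    rw [hrw]
    refine (MeasurableSet.inter (MeasurableSet.inter ?_ ?_) (MeasurableSet.inter ?_ ?_))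
    · exact measurableSet_eq_fun (measurable_pi_apply 0) measurable_const
    · exact MeasurableSet.iInter fun n =>
        measurableSet_le (measurable_pi_apply n) (measurable_pi_apply (n + 1))
    · exact MeasurableSet.iInter fun j => measurableSet_le (hmeas_m _) (hmeas_m _)
    · exact MeasurableSet.iUnion fun N => MeasurableSet.iInter fun j =>
        measurableSet_eq_fun (hmeas_m _) measurable_const
  have haev : ∀ᵐ V ∂F, IsValuation V := by
    rw [ae_iff]
    have hcompl : {V : ℕ → ℝ | ¬IsValuation V} = {V : ℕ → ℝ | IsValuation V}ᶜ := rfl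
    rw [hcompl, measure_compl hvalmeas (measure_ne_top F _), hval, measure_univ]
    simp
  have hAmeas : MeasurableSet A := by
    have hrw : A = ⋃ k : ℕ, {V : ℕ → ℝ | C ≤ k ∧ 1 ≤ k ∧ p ≤ marg V k} := by
      ext V
      simp only [hAdef, Set.mem_setOf_eq, Set.mem_iUnion]
      exact le_dem_iff' hC p
    rw [hrw]
    refine MeasurableSet.iUnion fun k => ?_
    by_cases hk : C ≤ k ∧ 1 ≤ k
    · have hseq : {V : ℕ → ℝ | C ≤ k ∧ 1 ≤ k ∧ p ≤ marg V k}
          = {V : ℕ → ℝ | p ≤ marg V k} := by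
        ext V; simp [hk.1, hk.2]
      rw [hseq]; exact hSmeas p k
    · have hseq : {V : ℕ → ℝ | C ≤ k ∧ 1 ≤ k ∧ p ≤ marg V k} = (∅ : Set (ℕ → ℝ)) := by
        ext V
        simp only [Set.mem_setOf_eq, Set.mem_empty_iff_false, iff_false]
        intro h; exact hk ⟨h.1, h.2.1⟩
      rw [hseq]; exact MeasurableSet.empty
  have hint_g : ∀ (x : ℝ) (j : ℕ),
      Integrable ({W : ℕ → ℝ | x ≤ marg W j}.indicator
        (fun V => marg V j - marg Q j)) F := fun x j =>
    Integrable.indicator ((hint_m j).sub (integrable_const _)) (hSmeas x j)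
  have hint_pos : ∀ j : ℕ, Integrable (fun V : ℕ → ℝ => max (marg V j - r) 0) F := fun j =>
    ((hint_m j).sub (integrable_const r)).pos_part
  have hind_integrable : ∀ M : ℝ, Integrable (A.indicator (fun _ => M)) F :=
    fun M => (integrable_const M).indicator hAmeas
  have hind_int : ∀ M : ℝ, ∫ V, A.indicator (fun _ => M) V ∂F = q * M := by
    intro M
    rw [integral_indicator_const M hAmeas, smul_eq_mul]
    rfl
  -- welfare decomposition
  have hW : ∀ (Cc : ℕ) (x : ℝ), Wfl F Q (Cc : ℕ∞) x
      = ∑ j ∈ Finset.Icc 1 Cc, ∫ V, ({W : ℕ → ℝ | x ≤ marg W j}.indicator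
          (fun V => marg V j - marg Q j)) V ∂F := by
    intro Cc x
    rw [Wfl, ← integral_finset_sum _ (fun j _ => hint_g x j)]
    apply integral_congr_ae
    filter_upwards [haev] with V hV
    rw [welfare_eq hV hQ x]
    apply Finset.sum_congr rfl
    intro j _
    rw [Set.indicator_apply]
    simp only [Set.mem_setOf_eq]
  -- cost facts
  have hCR : (0 : ℝ) < C := by exact_mod_cast hC
  have hQC : Q C = C * r := by
    rw [hrdef]; unfold safeP; field_simp
  have hteleQ : ∑ j ∈ Finset.Icc 1 C, marg Q j = Q C := (telescope hQ.1 C).symm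
  have htot : ∑ j ∈ Finset.Icc 1 C, (r - marg Q j) = 0 := by
    rw [Finset.sum_sub_distrib, hteleQ, Finset.sum_const, Nat.card_Icc, hQC]
    simp [nsmul_eq_mul]
  set D := ∑ j ∈ Finset.Icc 1 C, max (marg Q j - r) 0 with hDdef
  have hD0 : 0 ≤ D := Finset.sum_nonneg fun j _ => le_max_right _ _
  have hD2 : ∑ j ∈ Finset.Icc 1 C, max (r - marg Q j) 0 = D := by
    have hterm : ∀ j ∈ Finset.Icc 1 C,
        max (r - marg Q j) 0 = max (marg Q j - r) 0 + (r - marg Q j) := by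
      intro j _
      rcases le_total (marg Q j) r with h | h
      · rw [max_eq_left (by linarith), max_eq_right (by linarith)]; ring
      · rw [max_eq_right (by linarith), max_eq_left (by linarith)]; ring
    rw [Finset.sum_congr rfl hterm, Finset.sum_add_distrib, htot, hDdef]
    ring
  -- crossover index j0
  have hc1r : marg Q 1 ≤ r := by
    have h2 := Finset.card_nsmul_le_sum (Finset.Icc 1 C) (marg Q) (marg Q 1)
      (fun j hj => cost_mono hQ 1 j le_rfl (Finset.mem_Icc.1 hj).1)
    rw [Nat.card_Icc, hteleQ, hQC, nsmul_eq_mul] at h2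
    have hcast : ((C + 1 - 1 : ℕ) : ℝ) = (C : ℝ) := by norm_num
    rw [hcast] at h2
    nlinarith
  have hne : ((Finset.Icc 1 C).filter (fun j => marg Q j ≤ r)).Nonempty := by
    refine ⟨1, ?_⟩
    rw [Finset.mem_filter, Finset.mem_Icc]
    exact ⟨⟨le_rfl, hC⟩, hc1r⟩
  obtain ⟨j0, hj0mem, hj0max⟩ :
      ∃ j0, j0 ∈ (Finset.Icc 1 C).filter (fun j => marg Q j ≤ r) ∧
        ∀ j ∈ (Finset.Icc 1 C).filter (fun j => marg Q j ≤ r), j ≤ j0 :=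
    ⟨Finset.max' _ hne, Finset.max'_mem _ hne, fun j hj => Finset.le_max' _ j hj⟩
  rw [Finset.mem_filter, Finset.mem_Icc] at hj0mem
  have hj01 : 1 ≤ j0 := hj0mem.1.1
  have hj0C : j0 ≤ C := hj0mem.1.2
  have hj0r : marg Q j0 ≤ r := hj0mem.2
  have hgt : ∀ j : ℕ, j0 < j → j ≤ C → r < marg Q j := by
    intro j hlt hle
    by_contra hcon
    push_neg at hcon
    have hmem : j ∈ (Finset.Icc 1 C).filter (fun j => marg Q j ≤ r) := by
      rw [Finset.mem_filter, Finset.mem_Icc]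
      exact ⟨⟨by omega, hle⟩, hcon⟩
    have := hj0max j hmem
    omega
  have hsplitIcc : ∀ f : ℕ → ℝ,
      (∑ j ∈ Finset.Icc 1 j0, f j) + ∑ j ∈ Finset.Icc (j0 + 1) C, f j
        = ∑ j ∈ Finset.Icc 1 C, f j := by
    intro f
    rw [show Finset.Icc (j0 + 1) C = Finset.Ioc j0 C from Finset.Icc_add_one_left_eq_Ioc j0 C,
      show Finset.Icc 1 j0 = Finset.Ioc 0 j0 from Finset.Icc_add_one_left_eq_Ioc 0 j0,
      show Finset.Icc 1 C = Finset.Ioc 0 C from Finset.Icc_add_one_left_eq_Ioc 0 C]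
    exact Finset.sum_Ioc_consecutive f (Nat.zero_le j0) hj0C
  have hDalt : ∑ j ∈ Finset.Icc (j0 + 1) C, (marg Q j - r) = D := by
    have h1 : ∀ j ∈ Finset.Icc 1 j0, max (marg Q j - r) 0 = 0 := by
      intro j hj; rw [Finset.mem_Icc] at hj
      have := cost_mono hQ j j0 hj.1 hj.2
      exact max_eq_right (by linarith)
    have h2 : ∀ j ∈ Finset.Icc (j0 + 1) C, max (marg Q j - r) 0 = marg Q j - r := by
      intro j hj; rw [Finset.mem_Icc] at hj
      have := hgt j (by omega) hj.2
      exact max_eq_left (by linarith)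
    calc ∑ j ∈ Finset.Icc (j0 + 1) C, (marg Q j - r)
        = (∑ j ∈ Finset.Icc 1 j0, max (marg Q j - r) 0)
            + ∑ j ∈ Finset.Icc (j0 + 1) C, max (marg Q j - r) 0 := by
          rw [Finset.sum_congr rfl h1, Finset.sum_congr rfl h2]
          simp
      _ = D := by rw [hsplitIcc (fun j => max (marg Q j - r) 0), hDdef]
  -- S_plus
  set Splus := ∑ j ∈ Finset.Icc 1 C, ∫ V, max (marg V j - r) 0 ∂F with hSplusdef
  have hPp0 : ∀ j : ℕ, 0 ≤ ∫ V, max (marg V j - r) 0 ∂F := fun j =>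
    integral_nonneg (fun V => le_max_right _ _)
  have hSplus0 : 0 ≤ Splus := Finset.sum_nonneg fun j _ => hPp0 j
  -- (gamma) : Splus ≤ S
  have hgamma : Splus ≤ Wfl F Q (C : ℕ∞) r := by
    rw [hSplusdef, ← integral_finset_sum _ (fun j _ => hint_pos j), Wfl]
    have hint_w : Integrable (fun V : ℕ → ℝ =>
        V (sold (C : ℕ∞) r V) - Q (sold (C : ℕ∞) r V)) F := by
      apply Integrable.congr (integrable_finset_sum (Finset.Icc 1 C) (fun j _ => hint_g r j))
      filter_upwards [haev] with V hV
      rw [welfare_eq hV hQ r]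
      apply Finset.sum_congr rfl
      intro j _
      rw [Set.indicator_apply]
      simp only [Set.mem_setOf_eq]
    apply integral_mono_ae (integrable_finset_sum _ (fun j _ => hint_pos j)) hint_w
    filter_upwards [haev] with V hV
    rw [welfare_eq hV hQ r]
    have hsum : ∑ j ∈ Finset.Icc 1 C, (if r ≤ marg V j then marg V j - marg Q j else 0)
        = (∑ j ∈ Finset.Icc 1 C, max (marg V j - r) 0)
          + ∑ j ∈ Finset.Icc 1 C, (if r ≤ marg V j then r - marg Q j else 0) := by
      rw [← Finset.sum_add_distrib]
      apply Finset.sum_congr rfl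
      intro j _
      by_cases h : r ≤ marg V j
      · rw [if_pos h, if_pos h, max_eq_left (by linarith)]; ring
      · push_neg at h
        rw [if_neg (by linarith), if_neg (by linarith), max_eq_right (by linarith)]; ring
    have hnn : 0 ≤ ∑ j ∈ Finset.Icc 1 C, (if r ≤ marg V j then r - marg Q j else 0) := by
      have key : ∀ j ∈ Finset.Icc 1 C, (if r ≤ marg V j then r - marg Q j else 0)
          = if j ∈ Finset.Icc 1 (sold (C : ℕ∞) r V) then r - marg Q j else 0 := by
        intro j hj
        rw [Finset.mem_Icc] at hj
        by_cases h : r ≤ marg V j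
        · rw [if_pos h, if_pos (Finset.mem_Icc.2 ⟨hj.1, (le_sold_iff hV hj.1 hj.2 r).2 h⟩)]
        · rw [if_neg h, if_neg]
          intro hmem
          rw [Finset.mem_Icc] at hmem
          exact h ((le_sold_iff hV hj.1 hj.2 r).1 hmem.2)
      rw [Finset.sum_congr rfl key, Finset.sum_ite_mem,
        Finset.inter_eq_right.2 (by
          intro j hj
          rw [Finset.mem_Icc] at hj ⊢
          exact ⟨hj.1, le_trans hj.2 sold_le⟩)]
      exact partial_sum_nonneg _ C _ sold_le
        (fun i j hi hij => by have := cost_mono hQ i j hi hij; linarith) htot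
    have hmle : ∀ j ∈ Finset.Icc 1 C, True := fun _ _ => trivial
    linarith [hsum, hnn]
  -- (alpha) : W ≤ Splus + D - q * D
  have halpha : Wfl F Q (C : ℕ∞) p ≤ Splus + D - q * D := by
    rw [hW C p]
    have hj_bound : ∀ j ∈ Finset.Icc 1 C,
        (∫ V, ({W : ℕ → ℝ | p ≤ marg W j}.indicator (fun V => marg V j - marg Q j)) V ∂F)
          ≤ (∫ V, max (marg V j - r) 0 ∂F) + max (r - marg Q j) 0
            - q * max (marg Q j - r) 0 := by
      intro j hj
      rw [Finset.mem_Icc] at hj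
      have hptwise : ∀ᵐ V ∂F,
          ({W : ℕ → ℝ | p ≤ marg W j}.indicator (fun V => marg V j - marg Q j)) V
            ≤ max (marg V j - r) 0 + max (r - marg Q j) 0
              - A.indicator (fun _ => max (marg Q j - r) 0) V := by
        filter_upwards [haev] with V hV
        rw [Set.indicator_apply, Set.indicator_apply]
        simp only [Set.mem_setOf_eq]
        have h2 : r - marg Q j = max (r - marg Q j) 0 - max (marg Q j - r) 0 := by
          rcases le_total (marg Q j) r with h | h
          · rw [max_eq_left (by linarith), max_eq_right (by linarith)]; ring
          · rw [max_eq_right (by linarith), max_eq_left (by linarith)]; ring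
        by_cases hA' : V ∈ A
        · rw [if_pos hA']
          have hpj : p ≤ marg V j := by
            have hpC : p ≤ marg V C := (le_dem_iff hV hC p).1 hA'
            exact le_trans hpC (marg_antitone hV j C hj.1 hj.2)
          rw [if_pos hpj]
          have h1 : marg V j - r ≤ max (marg V j - r) 0 := le_max_left _ _
          linarith
        · rw [if_neg hA']
          by_cases hpj : p ≤ marg V j
          · rw [if_pos hpj]
            have h1 : marg V j - r ≤ max (marg V j - r) 0 := le_max_left _ _
            have h3 : r - marg Q j ≤ max (r - marg Q j) 0 := le_max_left _ _
            linarith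
          · rw [if_neg hpj]
            have h1 : (0:ℝ) ≤ max (marg V j - r) 0 := le_max_right _ _
            have h3 : (0:ℝ) ≤ max (r - marg Q j) 0 := le_max_right _ _
            linarith
      have hrhs : ∫ V, (max (marg V j - r) 0 + max (r - marg Q j) 0
            - A.indicator (fun _ => max (marg Q j - r) 0) V) ∂F
          = (∫ V, max (marg V j - r) 0 ∂F) + max (r - marg Q j) 0
            - q * max (marg Q j - r) 0 := by
        have hi1 : Integrable (fun V : ℕ → ℝ =>
            max (marg V j - r) 0 + max (r - marg Q j) 0) F :=
          (hint_pos j).add (integrable_const _)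
        rw [integral_sub hi1 (hind_integrable _),
          integral_add (hint_pos j) (integrable_const _), integral_const, hind_int]
        simp [measure_univ]
      calc (∫ V, ({W : ℕ → ℝ | p ≤ marg W j}.indicator (fun V => marg V j - marg Q j)) V ∂F)
          ≤ ∫ V, (max (marg V j - r) 0 + max (r - marg Q j) 0
              - A.indicator (fun _ => max (marg Q j - r) 0) V) ∂F :=
            integral_mono_ae (hint_g p j)
              (by
                have hi1 : Integrable (fun V : ℕ → ℝ =>
                    max (marg V j - r) 0 + max (r - marg Q j) 0) F :=
                  (hint_pos j).add (integrable_const _)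
                exact hi1.sub (hind_integrable _)) hptwise
        _ = _ := hrhs
    calc ∑ j ∈ Finset.Icc 1 C,
          ∫ V, ({W : ℕ → ℝ | p ≤ marg W j}.indicator (fun V => marg V j - marg Q j)) V ∂F
        ≤ ∑ j ∈ Finset.Icc 1 C, ((∫ V, max (marg V j - r) 0 ∂F) + max (r - marg Q j) 0
            - q * max (marg Q j - r) 0) := Finset.sum_le_sum hj_bound
      _ = Splus + D - q * D := by
          rw [Finset.sum_sub_distrib, Finset.sum_add_distrib, ← Finset.mul_sum, hD2,
            ← hSplusdef, ← hDdef]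
  -- (beta) : q * D ≤ Splus
  have hbeta : q * D ≤ Splus := by
    have hopt' := hopt j0 p hj01 hp
    rw [hW C p, hW j0 p] at hopt'
    have hsplit := hsplitIcc (fun j =>
      ∫ V, ({W : ℕ → ℝ | p ≤ marg W j}.indicator (fun V => marg V j - marg Q j)) V ∂F)
    have htail : 0 ≤ ∑ j ∈ Finset.Icc (j0 + 1) C,
        ∫ V, ({W : ℕ → ℝ | p ≤ marg W j}.indicator (fun V => marg V j - marg Q j)) V ∂F := by
      linarith
    have hj_bound : ∀ j ∈ Finset.Icc (j0 + 1) C,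
        (∫ V, ({W : ℕ → ℝ | p ≤ marg W j}.indicator (fun V => marg V j - marg Q j)) V ∂F)
          ≤ (∫ V, max (marg V j - r) 0 ∂F) - q * (marg Q j - r) := by
      intro j hj
      rw [Finset.mem_Icc] at hj
      have hj1 : 1 ≤ j := by omega
      have hjC : j ≤ C := hj.2
      have hcr : 0 ≤ marg Q j - r := by
        have := hgt j (by omega) hjC; linarith
      have hptwise : ∀ᵐ V ∂F,
          ({W : ℕ → ℝ | p ≤ marg W j}.indicator (fun V => marg V j - marg Q j)) V
            ≤ max (marg V j - r) 0 - A.indicator (fun _ => marg Q j - r) V := by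
        filter_upwards [haev] with V hV
        rw [Set.indicator_apply, Set.indicator_apply]
        simp only [Set.mem_setOf_eq]
        by_cases hA' : V ∈ A
        · rw [if_pos hA']
          have hpj : p ≤ marg V j := by
            have hpC : p ≤ marg V C := (le_dem_iff hV hC p).1 hA'
            exact le_trans hpC (marg_antitone hV j C hj1 hjC)
          rw [if_pos hpj]
          have h1 : marg V j - r ≤ max (marg V j - r) 0 := le_max_left _ _
          linarith
        · rw [if_neg hA']
          by_cases hpj : p ≤ marg V j
          · rw [if_pos hpj]
            have h1 : marg V j - r ≤ max (marg V j - r) 0 := le_max_left _ _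
            linarith
          · rw [if_neg hpj]
            have h1 : (0:ℝ) ≤ max (marg V j - r) 0 := le_max_right _ _
            linarith
      have hrhs : ∫ V, (max (marg V j - r) 0 - A.indicator (fun _ => marg Q j - r) V) ∂F
          = (∫ V, max (marg V j - r) 0 ∂F) - q * (marg Q j - r) := by
        rw [integral_sub (hint_pos j) (hind_integrable _), hind_int]
      calc (∫ V, ({W : ℕ → ℝ | p ≤ marg W j}.indicator (fun V => marg V j - marg Q j)) V ∂F)
          ≤ ∫ V, (max (marg V j - r) 0 - A.indicator (fun _ => marg Q j - r) V) ∂F :=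
            integral_mono_ae (hint_g p j) ((hint_pos j).sub (hind_integrable _)) hptwise
        _ = _ := hrhs
    have hsum2 : ∑ j ∈ Finset.Icc (j0 + 1) C,
          ((∫ V, max (marg V j - r) 0 ∂F) - q * (marg Q j - r))
        = (∑ j ∈ Finset.Icc (j0 + 1) C, ∫ V, max (marg V j - r) 0 ∂F) - q * D := by
      rw [Finset.sum_sub_distrib, ← Finset.mul_sum, hDalt]
    have h3 : 0 ≤ (∑ j ∈ Finset.Icc (j0 + 1) C, ∫ V, max (marg V j - r) 0 ∂F) - q * D := by
      have := Finset.sum_le_sum hj_bound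
      rw [hsum2] at this
      linarith
    have h4 : (∑ j ∈ Finset.Icc (j0 + 1) C, ∫ V, max (marg V j - r) 0 ∂F) ≤ Splus := by
      rw [hSplusdef]
      apply Finset.sum_le_sum_of_subset_of_nonneg
      · intro j hj
        rw [Finset.mem_Icc] at hj ⊢
        exact ⟨by omega, hj.2⟩
      · intro j _ _
        exact hPp0 j
    linarith
  -- final algebra
  have hq1 : q ≤ 1 := by
    rw [hqdef]
    have h := ENNReal.toReal_mono (by simp) (prob_le_one (μ := F) (s := A))
    simpa using h
  have hS0 : 0 ≤ Wfl F Q (C : ℕ∞) r := le_trans hSplus0 hgamma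
  have h1 : q * Wfl F Q (C : ℕ∞) p ≤ q * (Splus + D - q * D) :=
    mul_le_mul_of_nonneg_left halpha (le_of_lt hq)
  have h2 : (1 - q) * (q * D) ≤ (1 - q) * Splus :=
    mul_le_mul_of_nonneg_left hbeta (by linarith)
  have hkey : q * Wfl F Q (C : ℕ∞) p ≤ Wfl F Q (C : ℕ∞) r := by
    nlinarith [hgamma]
  calc Wfl F Q (C : ℕ∞) p ≤ (Wfl F Q (C : ℕ∞) r) / q := by
        rw [le_div_iff₀ hq]
        linarith [hkey]
    _ ≤ (1 + 2 / q) * Wfl F Q (C : ℕ∞) r := by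
        rw [div_eq_mul_inv, mul_comm]
        apply mul_le_mul_of_nonneg_right ?_ hS0
        rw [← one_div]
        have h2' : 1 / q ≤ 2 / q := (div_le_div_iff_of_pos_right hq).2 (by norm_num)
        linarith [h2']

end
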